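/- Let W be the affine symmetric group of type Ã_{n−1} with n ≥ 2, and W' the reflection subgroup generated by t₁ = (i,j)_0 and t₂ = (j,i)_1 for 1 ≤ i < j ≤ n. Then every positive root β of W lying in the nonnegative real span of β_{t₁} and β_{t₂} is of the form β_{(i,j)_p} with p ∈ N or β_{(j,i)_p} with p ∈ N^*. Hence W' is a generalized rank two parabolic subgroup of W of type Ã₁ whose reflections are {(i,j)_p : p ∈ N} ∪ {(j,i)_p : p ∈ N^*}. -/
import Mathlib


/- Statement 7: for 1 ≤ i < j ≤ n, every positive root of type Ã_{n-1} lying in the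
nonnegative real span of β_{t₁} = α_i+⋯+α_{j-1} and β_{t₂} = δ − β_{t₁} is of the form
β_{(i,j)_p} = β_{t₁} + pδ (p ∈ ℕ) or β_{(j,i)_p} = −β_{t₁} + pδ (p ∈ ℕ*); hence the
positive roots in the real span of β_{t₁}, β_{t₂} are exactly these roots
(the generalized rank-two parabolic subgroup of type Ã₁). -/

open scoped Classical

noncomputable section

/-- The vector `α_i + ⋯ + α_{j-1}` (for `i < j`), in `V = (ZMod n) → ℝ` with the simple
roots as coordinate vectors. -/
def beta0 (n : ℕ) (i j : ℤ) : ZMod n → ℝ :=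
  fun k => ∑ t ∈ Finset.Ico i j, if k = (t : ZMod n) then 1 else 0

/-- The imaginary root `δ = α_0 + ⋯ + α_{n-1}`. -/
def deltaVec (n : ℕ) : ZMod n → ℝ := fun _ => 1

/-- The positive root system of type `Ã_{n-1}`:
`Φ⁺ = {β_{(i,j)} + pδ, −β_{(i,j)} + (p+1)δ : 0 ≤ i < j ≤ n, j − i < n, p ∈ ℕ}`. -/
def PhiPlus (n : ℕ) : Set (ZMod n → ℝ) :=
  {v | ∃ i j : ℤ, ∃ p : ℕ, 0 ≤ i ∧ i < j ∧ j ≤ n ∧ j - i < n ∧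
    (v = beta0 n i j + (p : ℝ) • deltaVec n ∨
     v = -(beta0 n i j) + ((p : ℝ) + 1) • deltaVec n)}

lemma beta0_unique {n : ℕ} {a b t t' : ℤ} (hba : b - a ≤ n)
    (ht : t ∈ Finset.Ico a b) (ht' : t' ∈ Finset.Ico a b)
    (h : (t : ZMod n) = (t' : ZMod n)) : t = t' := by
  simp only [Finset.mem_Ico] at ht ht'
  have h2 : (n : ℤ) ∣ t' - t := (ZMod.intCast_eq_intCast_iff_dvd_sub t t' n).mp h
  have h3 : t' - t = 0 := Int.eq_zero_of_abs_lt_dvd h2 (abs_lt.mpr ⟨by omega, by omega⟩)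
  omega

lemma beta0_mem01 {n : ℕ} {a b : ℤ} (hba : b - a ≤ n) (k : ZMod n) :
    beta0 n a b k = 0 ∨ beta0 n a b k = 1 := by
  unfold beta0
  by_cases h : ∃ t ∈ Finset.Ico a b, k = (t : ZMod n)
  · obtain ⟨t0, ht0, hk⟩ := h
    right
    rw [Finset.sum_eq_single_of_mem t0 ht0]
    · rw [if_pos hk]
    · intro t ht htt
      rw [if_neg]
      intro hkt
      exact htt (beta0_unique hba ht ht0 (by rw [← hkt, ← hk]))
  · left
    push_neg at h
    exact Finset.sum_eq_zero fun t ht => if_neg (h t ht)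

lemma beta0_left {n : ℕ} {a b : ℤ} (hab : a < b) (hba : b - a ≤ n) :
    beta0 n a b ((a : ZMod n)) = 1 := by
  unfold beta0
  rw [Finset.sum_eq_single_of_mem a (by simp [Finset.mem_Ico]; omega)]
  · simp
  · intro t ht hta
    exact if_neg fun h =>
      hta (beta0_unique hba ht (by simp [Finset.mem_Ico]; omega) h.symm)

lemma beta0_right {n : ℕ} {a b : ℤ} (hab : a ≤ b) (hba : b - a < n) :
    beta0 n a b ((b : ZMod n)) = 0 := by
  unfold beta0
  apply Finset.sum_eq_zero
  intro t ht
  simp only [Finset.mem_Ico] at ht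
  rw [if_neg]
  intro h
  have h2 : (n : ℤ) ∣ t - b := (ZMod.intCast_eq_intCast_iff_dvd_sub b t n).mp h
  have h3 : t - b = 0 := Int.eq_zero_of_abs_lt_dvd h2 (abs_lt.mpr ⟨by omega, by omega⟩)
  omega

theorem statement7 (n : ℕ) (hn : 2 ≤ n) (i j : ℤ)
    (hi : 1 ≤ i) (hij : i < j) (hj : j ≤ n) :
    (∀ β ∈ PhiPlus n,
      (∃ lam mu : ℝ, 0 ≤ lam ∧ 0 ≤ mu ∧
          β = lam • beta0 n i j + mu • (deltaVec n - beta0 n i j)) →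
        (∃ p : ℕ, β = beta0 n i j + (p : ℝ) • deltaVec n) ∨
        (∃ p : ℕ, 1 ≤ p ∧ β = -(beta0 n i j) + (p : ℝ) • deltaVec n)) ∧
    ({β ∈ PhiPlus n | ∃ lam mu : ℝ,
        β = lam • beta0 n i j + mu • (deltaVec n - beta0 n i j)} =
      {β | ∃ p : ℕ, β = beta0 n i j + (p : ℝ) • deltaVec n} ∪
        {β | ∃ p : ℕ, 1 ≤ p ∧ β = -(beta0 n i j) + (p : ℝ) • deltaVec n}) := by
  have hB1 : beta0 n i j ((i : ZMod n)) = 1 := beta0_left hij (by omega)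
  have hB0 : beta0 n i j ((j : ZMod n)) = 0 := beta0_right (le_of_lt hij) (by omega)
  have hB01 : ∀ k, beta0 n i j k = 0 ∨ beta0 n i j k = 1 := beta0_mem01 (by omega)
  have key : ∀ β ∈ PhiPlus n, (∀ lam mu : ℝ,
      β = lam • beta0 n i j + mu • (deltaVec n - beta0 n i j) →
      (∃ p : ℕ, β = beta0 n i j + (p : ℝ) • deltaVec n) ∨
      (∃ p : ℕ, 1 ≤ p ∧ β = -(beta0 n i j) + (p : ℝ) • deltaVec n)) := by
    rintro β hβ lam mu hspan
    obtain ⟨a, b, p, ha, hab, hbn, hban, hcase⟩ := hβ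
    have hval : ∀ k, β k = lam * beta0 n i j k + mu * (1 - beta0 n i j k) := by
      intro k
      rw [hspan]
      simp [deltaVec, Pi.add_apply, Pi.smul_apply, Pi.sub_apply, smul_eq_mul]
    have ha1 : beta0 n a b ((a : ZMod n)) = 1 := beta0_left hab (by omega)
    have hb0 : beta0 n a b ((b : ZMod n)) = 0 := beta0_right (le_of_lt hab) hban
    have hab01 : ∀ k, beta0 n a b k = 0 ∨ beta0 n a b k = 1 := beta0_mem01 (by omega)
    have hβ01 : ∀ k, β k = (p : ℝ) ∨ β k = (p : ℝ) + 1 := by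
      intro k
      rcases hcase with h | h <;>
        rw [h] <;>
        simp only [Pi.add_apply, Pi.neg_apply, Pi.smul_apply, deltaVec, smul_eq_mul,
          mul_one] <;>
        rcases hab01 k with h0 | h1
      · left; rw [h0]; ring
      · right; rw [h1]; ring
      · right; rw [h0]; ring
      · left; rw [h1]; ring
    have hlo : ∃ k, β k = (p : ℝ) := by
      rcases hcase with h | h
      · exact ⟨(b : ZMod n), by rw [h]; simp [hb0, deltaVec]⟩
      · exact ⟨(a : ZMod n), by rw [h]; simp [ha1, deltaVec]; try ring⟩
    have hhi : ∃ k, β k = (p : ℝ) + 1 := by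
      rcases hcase with h | h
      · exact ⟨(a : ZMod n), by rw [h]; simp [ha1, deltaVec]; try ring⟩
      · exact ⟨(b : ZMod n), by rw [h]; simp [hb0, deltaVec]; try ring⟩
    have hlam : lam = β ((i : ZMod n)) := by rw [hval, hB1]; ring
    have hmu : mu = β ((j : ZMod n)) := by rw [hval, hB0]; ring
    rcases hβ01 ((i : ZMod n)) with hL | hL <;> rcases hβ01 ((j : ZMod n)) with hM | hM
    · -- lam = p, mu = p : β constant p, contradicts hhi
      exfalso
      obtain ⟨k, hk⟩ := hhi
      have h := hval k
      rw [hk, hlam, hL, hmu, hM] at h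
      rcases hB01 k with h0 | h0 <;> rw [h0] at h <;> linarith
    · -- lam = p, mu = p+1 : β = -B + (p+1)δ
      right
      refine ⟨p + 1, by omega, funext fun k => ?_⟩
      have h := hval k
      rw [hlam, hL, hmu, hM] at h
      simp only [Pi.add_apply, Pi.neg_apply, Pi.smul_apply, deltaVec, smul_eq_mul, mul_one]
      push_cast
      rcases hB01 k with h0 | h0 <;> rw [h0] at h ⊢ <;> rw [h] <;> ring
    · -- lam = p+1, mu = p : β = B + pδ
      left
      refine ⟨p, funext fun k => ?_⟩
      have h := hval k
      rw [hlam, hL, hmu, hM] at h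
      simp only [Pi.add_apply, Pi.smul_apply, deltaVec, smul_eq_mul, mul_one]
      rcases hB01 k with h0 | h0 <;> rw [h0] at h ⊢ <;> rw [h] <;> ring
    · -- lam = p+1, mu = p+1 : contradicts hlo
      exfalso
      obtain ⟨k, hk⟩ := hlo
      have h := hval k
      rw [hk, hlam, hL, hmu, hM] at h
      rcases hB01 k with h0 | h0 <;> rw [h0] at h <;> linarith
  constructor
  · rintro β hβ ⟨lam, mu, _, _, hspan⟩
    exact key β hβ lam mu hspan
  · ext β
    simp only [Set.mem_setOf_eq, Set.mem_union, Set.mem_sep_iff]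
    constructor
    · rintro ⟨hβ, lam, mu, hspan⟩
      exact key β hβ lam mu hspan
    · rintro (⟨p, rfl⟩ | ⟨p, hp, rfl⟩)
      · refine ⟨⟨i, j, p, by omega, hij, hj, by omega, Or.inl rfl⟩,
          (p : ℝ) + 1, p, ?_⟩
        funext k
        simp [deltaVec]
        ring
      · have hpc : ((p - 1 : ℕ) : ℝ) + 1 = (p : ℝ) := by
          rw [Nat.cast_sub hp]; ring
        refine ⟨⟨i, j, p - 1, by omega, hij, hj, by omega, Or.inr (by rw [hpc])⟩,
          (p : ℝ) - 1, p, ?_⟩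
        funext k
        simp [deltaVec]
        ring


end
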